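/- For d ≥ 2 and 1 ≤ i < d, the matrix W = I_{d-i} ⊕ O_i (identity block plus an i×i zero block) is a critical point of the Frobenius loss φ with φ(W) = i, and the curve γ(t) = I_{d-i} ⊕ [t] ⊕ O_{i-1} satisfies φ(γ(t)) = t⁶ − 2t³ + i; hence W is a saddle (not a local minimum). -/

import Mathlib

open Finset

/-- Frobenius loss `φ(W) = ∑_{i,j} ⟨wᵢ,wⱼ⟩³ − 2∑_{i,j} ⟨wᵢ,eⱼ⟩³ + d`. -/
noncomputable def phi (d : ℕ) (W : Fin d → Fin d → ℝ) : ℝ :=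
  (∑ i, ∑ j, (∑ k, W i k * W j k) ^ 3) - 2 * ∑ i, ∑ j, (W i j) ^ 3 + d

/-- The matrix `I_{d-i} ⊕ O_i`. -/
def idZero (d i : ℕ) : Fin d → Fin d → ℝ := fun a b =>
  if a = b ∧ (a : ℕ) < d - i then 1 else 0

/-- The radial curve `γ(t) = I_{d-i} ⊕ [t] ⊕ O_{i-1}`. -/
def idZeroCurve (d i : ℕ) (t : ℝ) : Fin d → Fin d → ℝ := fun a b =>
  if a = b ∧ (a : ℕ) < d - i then 1
  else if a = b ∧ (a : ℕ) = d - i then t else 0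

/- ### Auxiliary lemmas -/

noncomputable abbrev Ecoord (d : ℕ) (a b : Fin d) : (Fin d → Fin d → ℝ) →L[ℝ] ℝ :=
  (ContinuousLinearMap.proj b).comp
    (ContinuousLinearMap.proj (R := ℝ) (φ := fun _ : Fin d => Fin d → ℝ) a)

lemma hasFDerivAt_cube {E : Type*} [NormedAddCommGroup E] [NormedSpace ℝ E]
    {f : E → ℝ} {f' : E →L[ℝ] ℝ} {x : E} (h : HasFDerivAt f f' x) :
    HasFDerivAt (fun y => f y ^ 3) ((3 * f x ^ 2) • f') x := by
  have h2 := (h.fun_mul h).fun_mul h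
  convert h2 using 1
  · rfl
  · rfl
  · funext y; ring
  · ext v; simp; ring

lemma hasFDerivAt_gram (d : ℕ) (W : Fin d → Fin d → ℝ) (a b : Fin d) :
    HasFDerivAt (fun V : Fin d → Fin d → ℝ => ∑ k, V a k * V b k)
      (∑ k, (W a k • Ecoord d b k + W b k • Ecoord d a k)) W := by
  apply HasFDerivAt.fun_sum
  intro k _
  exact ((Ecoord d a k).hasFDerivAt).mul ((Ecoord d b k).hasFDerivAt)

lemma hasFDerivAt_phi (d : ℕ) (W : Fin d → Fin d → ℝ) :
    HasFDerivAt (phi d)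
      ((∑ a, ∑ b, (3 * (∑ k, W a k * W b k) ^ 2) •
          (∑ k, (W a k • Ecoord d b k + W b k • Ecoord d a k)))
        - (2:ℝ) • (∑ a, ∑ b, (3 * (W a b) ^ 2) • Ecoord d a b)) W := by
  have h1 : HasFDerivAt (fun V : Fin d → Fin d → ℝ => ∑ a, ∑ b, (∑ k, V a k * V b k) ^ 3)
      (∑ a, ∑ b, (3 * (∑ k, W a k * W b k) ^ 2) •
          (∑ k, (W a k • Ecoord d b k + W b k • Ecoord d a k))) W := by
    apply HasFDerivAt.fun_sum; intro a _
    apply HasFDerivAt.fun_sum; intro b _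
    exact hasFDerivAt_cube (hasFDerivAt_gram d W a b)
  have h2 : HasFDerivAt (fun V : Fin d → Fin d → ℝ => ∑ a, ∑ b, (V a b) ^ 3)
      (∑ a, ∑ b, (3 * (W a b) ^ 2) • Ecoord d a b) W := by
    apply HasFDerivAt.fun_sum; intro a _
    apply HasFDerivAt.fun_sum; intro b _
    exact hasFDerivAt_cube ((Ecoord d a b).hasFDerivAt)
  exact (h1.fun_sub (h2.const_mul 2)).add_const (d:ℝ)

lemma gram_idZero (d i : ℕ) (a b : Fin d) :
    ∑ k, idZero d i a k * idZero d i b k = idZero d i a b := by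
  classical
  rcases eq_or_ne a b with rfl | hab
  · by_cases hc : (a:ℕ) < d - i
    · simp [idZero, hc, Finset.sum_ite_eq]
    · simp [idZero, hc]
  · have h0 : ∀ k : Fin d, idZero d i a k * idZero d i b k = 0 := by
      intro k
      simp only [idZero, mul_ite, mul_one, mul_zero, ite_mul, one_mul, zero_mul]
      split_ifs with h1 h2
      · exact absurd (h1.1.trans h2.1.symm) (Ne.symm hab)
      all_goals rfl
    rw [Finset.sum_eq_zero fun k _ => h0 k]
    simp [idZero, hab]

lemma count_lt (d m : ℕ) (hm : m ≤ d) :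
    ∑ a : Fin d, (if (a:ℕ) < m then (1:ℝ) else 0) = m := by
  rw [Fin.sum_univ_eq_sum_range (fun x => if x < m then (1:ℝ) else 0)]
  rw [Finset.sum_ite, Finset.sum_const, Finset.sum_const]
  have h : Finset.filter (fun x => x < m) (Finset.range d) = Finset.range m := by
    ext x; simp [Finset.mem_filter]; omega
  simp [h]

lemma sum_diag (d m : ℕ) (hm : m < d) (c : ℝ) :
    ∑ a : Fin d, (if (a:ℕ) < m then (1:ℝ) else if (a:ℕ) = m then c else 0) = m + c := by
  have key : ∀ a : Fin d, (if (a:ℕ) < m then (1:ℝ) else if (a:ℕ) = m then c else 0)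
      = (if (a:ℕ) < m then (1:ℝ) else 0) + (if (a:ℕ) = m then c else 0) := by
    intro a; split_ifs <;> simp_all
  rw [Finset.sum_congr rfl fun a _ => key a, Finset.sum_add_distrib, count_lt d m hm.le]
  congr 1
  rw [Fin.sum_univ_eq_sum_range (fun x => if x = m then c else 0)]
  rw [Finset.sum_ite_eq' (Finset.range d) m (fun _ => c)]
  simp [Finset.mem_range.mpr hm]

lemma cube_idZero (d i : ℕ) (a b : Fin d) (n : ℕ) (hn : n ≠ 0) :
    (idZero d i a b) ^ n = idZero d i a b := by
  simp only [idZero]; split_ifs <;> simp [zero_pow hn]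

lemma sum_sum_idZero (d i : ℕ) :
    ∑ a : Fin d, ∑ b : Fin d, idZero d i a b = ((d - i : ℕ) : ℝ) := by
  have h : ∀ a : Fin d, ∑ b : Fin d, idZero d i a b
      = (if (a:ℕ) < d - i then (1:ℝ) else 0) := by
    intro a
    simp [idZero, ite_and, Finset.sum_ite_eq]
  rw [Finset.sum_congr rfl fun a _ => h a, count_lt d (d - i) (Nat.sub_le d i)]

lemma phi_idZero (d i : ℕ) (hid : i < d) : phi d (idZero d i) = i := by
  unfold phi
  have hg : ∀ a b : Fin d, (∑ k, idZero d i a k * idZero d i b k) ^ 3 = idZero d i a b := by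
    intro a b; rw [gram_idZero, cube_idZero _ _ _ _ 3 (by norm_num)]
  have hc : ∀ a b : Fin d, (idZero d i a b) ^ 3 = idZero d i a b := fun a b =>
    cube_idZero _ _ _ _ 3 (by norm_num)
  simp only [hg, hc, sum_sum_idZero]
  have : ((d - i : ℕ) : ℝ) = (d : ℝ) - i := by
    push_cast [Nat.cast_sub hid.le]; ring
  rw [this]; ring

/-- `δ` for the curve. -/
noncomputable def curveDiag (d i : ℕ) (t : ℝ) (a : Fin d) : ℝ :=
  if (a:ℕ) < d - i then 1 else if (a:ℕ) = d - i then t else 0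

lemma curve_eq_diag (d i : ℕ) (t : ℝ) (a b : Fin d) :
    idZeroCurve d i t a b = if a = b then curveDiag d i t a else 0 := by
  simp only [idZeroCurve, curveDiag]
  split_ifs <;> tauto

lemma gram_curve (d i : ℕ) (t : ℝ) (a b : Fin d) :
    ∑ k, idZeroCurve d i t a k * idZeroCurve d i t b k
      = if a = b then (curveDiag d i t a) ^ 2 else 0 := by
  classical
  simp only [curve_eq_diag]
  rcases eq_or_ne a b with rfl | hab
  · simp [Finset.sum_ite_eq, sq]
  · rw [if_neg hab, Finset.sum_eq_zero]
    intro k _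
    by_cases hak : a = k
    · subst hak; rw [if_neg (fun h : b = a => hab h.symm), mul_zero]
    · rw [if_neg hak, zero_mul]

lemma sum_pow_curve (d i : ℕ) (hi1 : 1 ≤ i) (hid : i < d) (t : ℝ) (n : ℕ) (hn : n ≠ 0) :
    ∑ a : Fin d, (curveDiag d i t a) ^ n = ((d - i : ℕ) : ℝ) + t ^ n := by
  have key : ∀ a : Fin d, (curveDiag d i t a) ^ n
      = (if (a:ℕ) < d - i then (1:ℝ) else if (a:ℕ) = d - i then t ^ n else 0) := by
    intro a; simp only [curveDiag]; split_ifs <;> simp [zero_pow hn]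
  rw [Finset.sum_congr rfl fun a _ => key a, sum_diag d (d - i) (by omega) (t ^ n)]

lemma phi_curve (d i : ℕ) (hi1 : 1 ≤ i) (hid : i < d) (t : ℝ) :
    phi d (idZeroCurve d i t) = t ^ 6 - 2 * t ^ 3 + i := by
  unfold phi
  have hg : ∀ a : Fin d, ∑ b : Fin d,
      (∑ k, idZeroCurve d i t a k * idZeroCurve d i t b k) ^ 3 = (curveDiag d i t a) ^ 6 := by
    intro a
    have : ∀ b : Fin d, (∑ k, idZeroCurve d i t a k * idZeroCurve d i t b k) ^ 3
        = if a = b then (curveDiag d i t a) ^ 6 else 0 := by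
      intro b; rw [gram_curve]; split_ifs <;> ring_nf <;> simp
    rw [Finset.sum_congr rfl fun b _ => this b, Finset.sum_ite_eq]
    simp
  have hc : ∀ a : Fin d, ∑ b : Fin d, (idZeroCurve d i t a b) ^ 3 = (curveDiag d i t a) ^ 3 := by
    intro a
    have : ∀ b : Fin d, (idZeroCurve d i t a b) ^ 3
        = if a = b then (curveDiag d i t a) ^ 3 else 0 := by
      intro b; rw [curve_eq_diag]; split_ifs <;> simp
    rw [Finset.sum_congr rfl fun b _ => this b, Finset.sum_ite_eq]
    simp
  rw [Finset.sum_congr rfl fun a _ => hg a, Finset.sum_congr rfl fun a _ => hc a,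
    sum_pow_curve d i hi1 hid t 6 (by norm_num), sum_pow_curve d i hi1 hid t 3 (by norm_num)]
  have : ((d - i : ℕ) : ℝ) = (d : ℝ) - i := by
    push_cast [Nat.cast_sub hid.le]; ring
  rw [this]; ring

lemma hIn_lemma (d i : ℕ) (H : Fin d → Fin d → ℝ) (a b : Fin d) :
    ∑ k, idZero d i a k * H b k = if (a:ℕ) < d - i then H b a else 0 := by
  simp [idZero, ite_and, ite_mul, Finset.sum_ite_eq]

lemma hT1_lemma (d i : ℕ) (H : Fin d → Fin d → ℝ) (a : Fin d) :
    ∑ b, (3 * idZero d i a b) *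
        (∑ k, (idZero d i a k * H b k + idZero d i b k * H a k))
      = if (a:ℕ) < d - i then 6 * H a a else 0 := by
  have step : ∀ b : Fin d, (3 * idZero d i a b) *
      (∑ k, (idZero d i a k * H b k + idZero d i b k * H a k))
      = if a = b then (if (a:ℕ) < d - i then 6 * H a a else 0) else 0 := by
    intro b
    rw [Finset.sum_add_distrib, hIn_lemma d i H a b, hIn_lemma d i H b a]
    rcases eq_or_ne a b with rfl | hab
    · by_cases hc : (a:ℕ) < d - i <;> simp [idZero, hc] <;> ring
    · simp [idZero, hab]
  rw [Finset.sum_congr rfl fun b _ => step b, Finset.sum_ite_eq]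
  simp

lemma hT2_lemma (d i : ℕ) (H : Fin d → Fin d → ℝ) (a : Fin d) :
    ∑ b, (3 * idZero d i a b) * H a b = if (a:ℕ) < d - i then 3 * H a a else 0 := by
  have step : ∀ b : Fin d, (3 * idZero d i a b) * H a b
      = if a = b then (if (a:ℕ) < d - i then 3 * H a a else 0) else 0 := by
    intro b
    rcases eq_or_ne a b with rfl | hab
    · by_cases hc : (a:ℕ) < d - i <;> simp [idZero, hc] <;> ring
    · simp [idZero, hab]
  rw [Finset.sum_congr rfl fun b _ => step b, Finset.sum_ite_eq]
  simp

lemma deriv_zero_idZero (d i : ℕ) :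
    ((∑ a, ∑ b, (3 * (∑ k, idZero d i a k * idZero d i b k) ^ 2) •
          (∑ k, (idZero d i a k • Ecoord d b k + idZero d i b k • Ecoord d a k)))
        - (2:ℝ) • (∑ a, ∑ b, (3 * (idZero d i a b) ^ 2) • Ecoord d a b))
      = (0 : (Fin d → Fin d → ℝ) →L[ℝ] ℝ) := by
  ext H
  have hsq : ∀ a b : Fin d, 3 * (∑ k, idZero d i a k * idZero d i b k) ^ 2
      = 3 * idZero d i a b := fun a b => by
    rw [gram_idZero, cube_idZero d i a b 2 (by norm_num)]
  have hsq2 : ∀ a b : Fin d, 3 * (idZero d i a b) ^ 2 = 3 * idZero d i a b := fun a b => by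
    rw [cube_idZero d i a b 2 (by norm_num)]
  simp only [hsq2, ContinuousLinearMap.sub_apply, ContinuousLinearMap.smul_apply,
    ContinuousLinearMap.coe_sum', Finset.sum_apply, ContinuousLinearMap.add_apply,
    smul_eq_mul, ContinuousLinearMap.coe_comp', Function.comp_apply,
    ContinuousLinearMap.proj_apply, ContinuousLinearMap.zero_apply, hsq]
  rw [Finset.sum_congr rfl fun a _ => hT1_lemma d i H a]
  rw [Finset.sum_congr rfl fun a _ => hT2_lemma d i H a]
  rw [Finset.mul_sum, ← Finset.sum_sub_distrib, Finset.sum_eq_zero]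
  intro a _
  split_ifs <;> ring

theorem stmt14 (d i : ℕ) (hd : 2 ≤ d) (hi1 : 1 ≤ i) (hid : i < d) :
    fderiv ℝ (phi d) (idZero d i) = 0 ∧
    phi d (idZero d i) = i ∧
    (∀ t : ℝ, phi d (idZeroCurve d i t) = t ^ 6 - 2 * t ^ 3 + i) ∧
    ¬ IsLocalMin (phi d) (idZero d i) := by
  classical
  have hγ0 : idZeroCurve d i 0 = idZero d i := by
    funext a b
    simp only [idZeroCurve, idZero]
    split_ifs <;> rfl
  -- derivative is zero
  have hD : HasFDerivAt (phi d) (0 : (Fin d → Fin d → ℝ) →L[ℝ] ℝ) (idZero d i) := by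
    have h := hasFDerivAt_phi d (idZero d i)
    rwa [deriv_zero_idZero d i] at h
  refine ⟨hD.fderiv, phi_idZero d i hid, fun t => phi_curve d i hi1 hid t, ?_⟩
  -- not a local min
  intro hmin
  have hcont : ContinuousAt (idZeroCurve d i) (0:ℝ) := by
    apply Continuous.continuousAt
    apply continuous_pi; intro a; apply continuous_pi; intro b
    by_cases h1 : a = b ∧ (a:ℕ) < d - i
    · obtain ⟨rfl, hlt⟩ := h1
      simpa [idZeroCurve, hlt] using (continuous_const : Continuous fun _ : ℝ => (1:ℝ))
    · by_cases h2 : a = b ∧ (a:ℕ) = d - i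
      · obtain ⟨rfl, he⟩ := h2
        have h1' : ¬ (a:ℕ) < d - i := fun h => h1 ⟨rfl, h⟩
        simpa [idZeroCurve, h1', he] using (continuous_id' : Continuous fun t : ℝ => t)
      · simpa [idZeroCurve, h1, h2] using (continuous_const : Continuous fun _ : ℝ => (0:ℝ))
  have htend : Filter.Tendsto (idZeroCurve d i) (nhds 0) (nhds (idZero d i)) := by
    have := hcont.tendsto
    rwa [hγ0] at this
  have hev : ∀ᶠ t in nhds (0:ℝ),
      phi d (idZero d i) ≤ phi d (idZeroCurve d i t) := htend.eventually hmin
  have hev' : ∀ᶠ t in nhds (0:ℝ), (0:ℝ) ≤ t ^ 6 - 2 * t ^ 3 := by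
    filter_upwards [hev] with t ht
    rw [phi_idZero d i hid, phi_curve d i hi1 hid] at ht
    linarith
  rw [Metric.eventually_nhds_iff] at hev'
  obtain ⟨ε, hε, hball⟩ := hev'
  set t : ℝ := min (ε / 2) (1 / 2) with htdef
  have ht0 : 0 < t := lt_min (by linarith) (by norm_num)
  have htε : dist t 0 < ε := by
    rw [Real.dist_eq, sub_zero, abs_of_pos ht0]
    calc t ≤ ε / 2 := min_le_left _ _
    _ < ε := by linarith
  have hkey := hball htε
  have ht1 : t ≤ 1 := le_trans (min_le_right _ _) (by norm_num)
  have h3 : 0 < t ^ 3 := pow_pos ht0 3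
  have h31 : t ^ 3 ≤ 1 := pow_le_one₀ ht0.le ht1
  have h6 : t ^ 6 = (t ^ 3) ^ 2 := by ring
  nlinarith [sq_nonneg (t ^ 3)]
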